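/- Let q be a prime power and n a positive integer with n | q²−1 and n > q+1. Let δ ∈ F_{q²}* \ F_q be an element of order n, and let C ⊆ F_q[x]/(x^n − 1) be the cyclic code with generator polynomial g(x) = (x−δ^{−q})(x−δ^{−1})(x−1)(x−δ)(x−δ^q). Then C is an [n, n−5, d]_q code with 4 ≤ d ≤ 6, and if 5 ≤ d ≤ 6 then C is an (n,7)_q MDS symbol-pair code. -/

import Mathlib

open Polynomial

/-- The pair-distance between two vectors indexed by `ZMod n`,
with indices taken modulo `n`. -/
def pairDist {n : ℕ} [NeZero n] {α : Type*} [DecidableEq α] (u v : ZMod n → α) : ℕ :=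
  (Finset.univ.filter fun i : ZMod n => (u i, u (i + 1)) ≠ (v i, v (i + 1))).card

/-- A finite subset of `ZMod n` consisting of (at least one) cyclically consecutive elements. -/
def IsArc {n : ℕ} (T : Finset (ZMod n)) : Prop :=
  ∃ (a : ZMod n) (k : ℕ), 0 < k ∧ T = (Finset.range k).image fun j : ℕ => a + (j : ZMod n)

/-- `L(S)`: the minimal number of parts in a partition of `S` into nonempty sets of
cyclically consecutive elements of `ZMod n`. -/
noncomputable def cycL {n : ℕ} (S : Finset (ZMod n)) : ℕ :=
  sInf {m | ∃ P : Finset (Finset (ZMod n)), P.card = m ∧ (∀ T ∈ P, IsArc T) ∧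
    (↑P : Set (Finset (ZMod n))).PairwiseDisjoint id ∧ P.sup id = S}

/-- The polynomial `∑ i, c i * x^i` associated to a vector `c` of length `n`. -/
noncomputable def polyOf {n : ℕ} [NeZero n] {F : Type*} [Semiring F] (c : ZMod n → F) :
    Polynomial F :=
  ∑ i : ZMod n, Polynomial.C (c i) * Polynomial.X ^ i.val

/-- `d` is the minimum pair-distance of the code `Code`. -/
def IsMinPairDist {n : ℕ} [NeZero n] {α : Type*} [DecidableEq α]
    (Code : Set (ZMod n → α)) (d : ℕ) : Prop :=
  (∀ u ∈ Code, ∀ v ∈ Code, u ≠ v → d ≤ pairDist u v) ∧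
    ∃ u ∈ Code, ∃ v ∈ Code, u ≠ v ∧ pairDist u v = d

/-- The coefficient `a₀(i) = ∑_{j=0}^{⌊(i−2)/2⌋} C(i−2−j, j) b^{i−2−2j} c^{j+1}`. -/
noncomputable def aCoeff0 {F : Type*} [Field F] (b c : F) (i : ℕ) : F :=
  ∑ j ∈ Finset.range ((i - 2) / 2 + 1),
    ((i - 2 - j).choose j : F) * b ^ (i - 2 - 2 * j) * c ^ (j + 1)

/-- The coefficient `a₁(i) = ∑_{j=0}^{⌊(i−1)/2⌋} C(i−1−j, j) b^{i−1−2j} c^{j}`. -/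
noncomputable def aCoeff1 {F : Type*} [Field F] (b c : F) (i : ℕ) : F :=
  ∑ j ∈ Finset.range ((i - 1) / 2 + 1),
    ((i - 1 - j).choose j : F) * b ^ (i - 1 - 2 * j) * c ^ j


section Aux
open Finset

lemma polyOf_coeff' {n : ℕ} [NeZero n] {F : Type*} [Semiring F] (c : ZMod n → F) (k : ℕ) :
    (polyOf c).coeff k = if k < n then c (k : ZMod n) else 0 := by
  classical
  rw [polyOf, Polynomial.finset_sum_coeff]
  simp only [Polynomial.coeff_C_mul, Polynomial.coeff_X_pow, mul_ite, mul_one, mul_zero]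
  split_ifs with h
  · rw [Finset.sum_eq_single ((k : ZMod n))]
    · simp [ZMod.val_cast_of_lt h]
    · intro j _ hj
      rw [if_neg]
      intro hk
      exact hj (by rw [hk]; simp [ZMod.natCast_val, ZMod.cast_id])
    · simp
  · apply Finset.sum_eq_zero
    intro j _
    rw [if_neg]
    intro hk
    exact h (hk ▸ ZMod.val_lt j)

lemma polyOf_coeff {n : ℕ} [NeZero n] {F : Type*} [Semiring F] (c : ZMod n → F) (i : ZMod n) :
    (polyOf c).coeff i.val = c i := by
  rw [polyOf_coeff', if_pos (ZMod.val_lt i)]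
  simp [ZMod.natCast_val, ZMod.cast_id]

lemma polyOf_recover {n : ℕ} [NeZero n] {F : Type*} [Semiring F] (p : Polynomial F)
    (hdeg : p.natDegree < n) : polyOf (fun i : ZMod n => p.coeff i.val) = p := by
  ext k
  rw [polyOf_coeff']
  split_ifs with h
  · congr 1
    exact ZMod.val_cast_of_lt h
  · exact (p.coeff_eq_zero_of_natDegree_lt (lt_of_lt_of_le hdeg (not_lt.mp h))).symm

lemma polyOf_sub {n : ℕ} [NeZero n] {F : Type*} [Ring F] (c c' : ZMod n → F) :
    polyOf (c - c') = polyOf c - polyOf c' := by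
  rw [polyOf, polyOf, polyOf, ← Finset.sum_sub_distrib]
  congr 1; ext i
  simp [sub_mul]

lemma polyOf_natDegree_lt {n : ℕ} [NeZero n] {F : Type*} [Semiring F] (c : ZMod n → F) :
    (polyOf c).natDegree < n := by
  have h := Polynomial.natDegree_le_iff_coeff_eq_zero (p := polyOf c) (n := n - 1)
  have hn : 0 < n := Nat.pos_of_ne_zero (NeZero.ne n)
  have := h.mpr (fun N hN => by rw [polyOf_coeff', if_neg (by omega)])
  omega

lemma pow_congr_mod {E : Type*} [Monoid E] {r : E} {n : ℕ} (hr : r ^ n = 1)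
    {x y : ℕ} (h : x ≡ y [MOD n]) : r ^ x = r ^ y := by
  have key : ∀ z : ℕ, r ^ z = r ^ (z % n) := by
    intro z
    conv_lhs => rw [← Nat.div_add_mod z n]
    rw [pow_add, pow_mul, hr, one_pow, one_mul]
  rw [key x, key y, h]

-- eval of mapped polyOf
lemma eval_map_polyOf {n : ℕ} [NeZero n] {F E : Type*} [CommSemiring F] [CommSemiring E]
    (φ : F →+* E) (c : ZMod n → F) (r : E) :
    ((polyOf c).map φ).eval r = ∑ i : ZMod n, φ (c i) * r ^ i.val := by
  rw [polyOf, Polynomial.map_sum, Polynomial.eval_finset_sum]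
  congr 1; ext i
  simp

lemma sumC_coeff {F : Type*} [Semiring F] {N : ℕ} (h : ℕ → F) (k : ℕ) (hk : k < N) :
    (∑ j ∈ Finset.range N, Polynomial.C (h j) * Polynomial.X ^ j).coeff k = h k := by
  classical
  rw [Polynomial.finset_sum_coeff]
  simp only [Polynomial.coeff_C_mul, Polynomial.coeff_X_pow, mul_ite, mul_one, mul_zero]
  rw [Finset.sum_eq_single k]
  · rw [if_pos rfl]
  · intro j _ hj; rw [if_neg (fun hh => hj hh.symm)]
  · intro hh; exact absurd (Finset.mem_range.mpr hk) hh

lemma sumC_natDegree_le {F : Type*} [Semiring F] {N : ℕ} (h : ℕ → F) (hN : 0 < N) :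
    (∑ j ∈ Finset.range N, Polynomial.C (h j) * Polynomial.X ^ j).natDegree ≤ N - 1 := by
  apply Polynomial.natDegree_sum_le_of_forall_le
  intro j hj
  refine le_trans (Polynomial.natDegree_C_mul_le _ _) ?_
  exact le_trans (Polynomial.natDegree_X_pow_le _) (Nat.le_sub_one_of_lt (Finset.mem_range.mp hj))

lemma numeric_facts {q n : ℕ} (hq2 : 2 ≤ q) (hdvd : n ∣ q ^ 2 - 1) (hn : q + 1 < n) :
    8 ≤ n ∧ n ≠ 2 * q := by
  constructor
  · by_contra h
    push_neg at h
    have hq5 : q ≤ 5 := by omega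
    interval_cases q <;> norm_num at hdvd <;> interval_cases n <;> revert hdvd <;> decide
  · rintro rfl
    obtain ⟨t, ht⟩ := hdvd
    have h4 : 1 ≤ q ^ 2 := Nat.one_le_pow _ _ (by omega)
    have e : q ^ 2 = 2 * q * t + 1 := by
      exact (Nat.sub_eq_iff_eq_add h4).mp ht
    have h6 : q ∣ 2 * q * t := ⟨2 * t, by ring⟩
    have h7 : q ∣ 2 * q * t + 1 := by
      rw [← e]; exact dvd_pow_self q two_ne_zero
    have h8 : q ∣ 1 := (Nat.dvd_add_right h6).mp h7
    exact absurd (Nat.le_of_dvd one_pos h8) (by omega)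

lemma delta_pow_inj {E : Type*} [Field E] {δ : E} {n : ℕ} (hδ0 : δ ≠ 0) (hδ : orderOf δ = n)
    {a b : ℕ} (ha : a < n) (hb : b < n) (h : δ ^ a = δ ^ b) : a = b := by
  set u : Eˣ := Units.mk0 δ hδ0 with hu
  have horder : orderOf u = n := by rw [← hδ]; exact (orderOf_units (y := u)).symm
  have hpow : u ^ a = u ^ b := by
    ext
    simpa [hu] using h
  have := pow_eq_pow_iff_modEq.mp hpow
  rw [horder] at this
  unfold Nat.ModEq at this
  rwa [Nat.mod_eq_of_lt ha, Nat.mod_eq_of_lt hb] at this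

lemma bch_weight {n : ℕ} [NeZero n] {F E : Type*} [Field F] [DecidableEq F] [Field E] [Algebra F E]
    {δ : E} (hδ0 : δ ≠ 0) (hδ : orderOf δ = n) (c : ZMod n → F)
    (h0 : ∑ i : ZMod n, algebraMap F E (c i) * δ⁻¹ ^ i.val = 0)
    (h1 : ∑ i : ZMod n, algebraMap F E (c i) * (1 : E) ^ i.val = 0)
    (h2 : ∑ i : ZMod n, algebraMap F E (c i) * δ ^ i.val = 0)
    (hw : (Finset.univ.filter fun i : ZMod n => c i ≠ 0).card ≤ 3) : c = 0 := by
  classical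
  set S := Finset.univ.filter fun i : ZMod n => c i ≠ 0 with hS
  set x : ZMod n → E := fun i => δ ^ i.val with hx
  have hxne : ∀ i, x i ≠ 0 := fun i => pow_ne_zero _ hδ0
  have hxinj : Function.Injective x := by
    intro i j hij
    have := delta_pow_inj hδ0 hδ (ZMod.val_lt i) (ZMod.val_lt j) hij
    exact ZMod.val_injective n this
  set z : ZMod n → E := fun i => algebraMap F E (c i) with hz
  set y : ZMod n → E := fun i => z i * (x i)⁻¹ with hy
  have hzero : ∀ i ∉ S, z i = 0 := by
    intro i hi
    simp only [hS, Finset.mem_filter, Finset.mem_univ, true_and, not_not] at hi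
    simp [hz, hi]
  have hpows : ∀ e ∈ Finset.range 3, ∑ i : ZMod n, y i * x i ^ e = 0 := by
    intro e he
    rw [Finset.mem_range] at he
    interval_cases e
    · rw [← h0]
      refine Finset.sum_congr rfl fun i _ => ?_
      rw [pow_zero, mul_one, hy, hx]
      simp [inv_pow]
      exact Or.inl rfl
    · rw [← h1]
      refine Finset.sum_congr rfl fun i _ => ?_
      rw [pow_one, one_pow, mul_one]
      show z i * (x i)⁻¹ * x i = z i
      rw [mul_assoc, inv_mul_cancel₀ (hxne i), mul_one]
    · rw [← h2]
      refine Finset.sum_congr rfl fun i _ => ?_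
      rw [hy]
      have : x i ≠ 0 := hxne i
      field_simp [hx]
      ring
  suffices hSempty : ∀ k ∈ S, False by
    funext i
    by_contra hi
    refine hSempty i ?_
    simp only [hS, Finset.mem_filter, Finset.mem_univ, true_and]
    simpa using hi
  intro k hk
  set P : Polynomial E := ∏ j ∈ S.erase k, (X - C (x j)) with hP
  have hPdeg : P.natDegree < 3 := by
    rw [hP, Polynomial.natDegree_prod _ _ (fun j _ => X_sub_C_ne_zero (x j))]
    simp only [natDegree_X_sub_C]
    have : (S.erase k).card ≤ 2 := by
      have := Finset.card_erase_of_mem hk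
      omega
    simpa using by omega
  have hsum1 : ∑ i : ZMod n, y i * P.eval (x i) = y k * P.eval (x k) := by
    apply Finset.sum_eq_single
    · intro i _ hik
      by_cases hiS : i ∈ S
      · have : P.eval (x i) = 0 := by
          rw [hP, Polynomial.eval_prod]
          apply Finset.prod_eq_zero (Finset.mem_erase.mpr ⟨hik, hiS⟩)
          simp
        rw [this, mul_zero]
      · show z i * (x i)⁻¹ * P.eval (x i) = 0
        rw [hzero i hiS, zero_mul, zero_mul]
    · intro h; exact absurd (Finset.mem_univ k) h
  have hsum2 : ∑ i : ZMod n, y i * P.eval (x i) = 0 := by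
    calc ∑ i : ZMod n, y i * P.eval (x i)
        = ∑ i : ZMod n, ∑ e ∈ Finset.range 3, P.coeff e * (y i * x i ^ e) := by
          refine Finset.sum_congr rfl fun i _ => ?_
          rw [Polynomial.eval_eq_sum_range' hPdeg, Finset.mul_sum]
          refine Finset.sum_congr rfl fun e _ => by ring
      _ = ∑ e ∈ Finset.range 3, P.coeff e * ∑ i : ZMod n, y i * x i ^ e := by
          rw [Finset.sum_comm]
          refine Finset.sum_congr rfl fun e _ => by rw [Finset.mul_sum]
      _ = 0 := by
          apply Finset.sum_eq_zero
          intro e he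
          rw [hpows e he, mul_zero]
  have hPk : P.eval (x k) ≠ 0 := by
    rw [hP, Polynomial.eval_prod]
    apply Finset.prod_ne_zero_iff.mpr
    intro j hj
    simp only [eval_sub, eval_X, eval_C]
    intro hcontra
    have : x k = x j := by linear_combination hcontra
    exact (Finset.mem_erase.mp hj).1 (hxinj this.symm)
  have hyk : y k = 0 := by
    have := hsum1.symm.trans hsum2
    exact (mul_eq_zero.mp this).resolve_right hPk
  have : z k = 0 := by
    rcases mul_eq_zero.mp hyk with h | h
    · exact h
    · exact absurd h (inv_ne_zero (hxne k))
  have hck : c k = 0 := by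
    apply (algebraMap F E).injective
    rw [map_zero]
    exact this
  simp only [hS, Finset.mem_filter, Finset.mem_univ, true_and] at hk
  exact hk hck

lemma val_add_natCast_modEq {n : ℕ} [NeZero n] (a : ZMod n) (j : ℕ) :
    ((a + (j : ZMod n)).val) ≡ a.val + j [MOD n] := by
  rw [ZMod.val_add, ZMod.val_natCast]
  have h1 : (a.val + j % n) % n ≡ a.val + j % n [MOD n] := Nat.mod_modEq _ n
  have h2 : a.val + j % n ≡ a.val + j [MOD n] := Nat.ModEq.add_left _ (Nat.mod_modEq j n)
  exact h1.trans h2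

lemma arc5 {q n : ℕ} [NeZero n] {F E : Type*} [Field F] [Field E] [Algebra F E]
    (hq2 : 2 ≤ q) (hn8 : 8 ≤ n) (hn2q : n ≠ 2 * q) (hn : q + 1 < n)
    {δ : E} (hδ0 : δ ≠ 0) (hδ : orderOf δ = n) (c : ZMod n → F) (a : ZMod n)
    (hv : ∀ t : Fin 5, ∑ i : ZMod n, algebraMap F E (c i) *
      (δ ^ (![n - q, n - 1, 0, 1, q] t : ℕ)) ^ i.val = 0)
    (hsupp : ∀ i, c i ≠ 0 → i ∈ (Finset.range 5).image (fun j : ℕ => a + (j : ZMod n))) :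
    c = 0 := by
  classical
  have helval : ∀ t : Fin 5, (![n - q, n - 1, 0, 1, q] t) < n := by
    intro t
    fin_cases t <;> simp <;> omega
  have helinj : Function.Injective (![n - q, n - 1, 0, 1, q] : Fin 5 → ℕ) := by
    intro s t hst
    fin_cases s <;> fin_cases t <;> simp at hst ⊢ <;> omega
  set el : Fin 5 → ℕ := ![n - q, n - 1, 0, 1, q] with hel
  set z : ZMod n → E := fun i => algebraMap F E (c i) with hz
  set h : Polynomial E := ∑ j ∈ Finset.range 5, C (z (a + j)) * X ^ j with hh
  have hinjarc : Set.InjOn (fun j : ℕ => a + (j : ZMod n)) (Finset.range 5) := by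
    intro j1 hj1 j2 hj2 he
    simp only [Finset.coe_range, Set.mem_Iio] at hj1 hj2
    have : (j1 : ZMod n) = (j2 : ZMod n) := by
      have := add_left_cancel he
      exact this
    have := congrArg ZMod.val this
    rw [ZMod.val_natCast, ZMod.val_natCast] at this
    rwa [Nat.mod_eq_of_lt (by omega), Nat.mod_eq_of_lt (by omega)] at this
  have heval : ∀ t : Fin 5, h.eval (δ ^ el t) = 0 := by
    intro t
    set r : E := δ ^ el t with hr
    have hrn : r ^ n = 1 := by
      rw [hr, ← pow_mul, mul_comm, pow_mul, ← hδ, pow_orderOf_eq_one, one_pow]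
    have hr0 : r ≠ 0 := pow_ne_zero _ hδ0
    have step1 : ∑ i ∈ (Finset.range 5).image (fun j : ℕ => a + (j : ZMod n)),
        z i * r ^ i.val = 0 := by
      rw [Finset.sum_subset (Finset.subset_univ _)]
      · exact hv t
      · intro i _ hi
        have : c i = 0 := by
          by_contra hc
          exact hi (hsupp i hc)
        simp [hz, this]
    rw [Finset.sum_image hinjarc] at step1
    have step2 : ∀ j ∈ Finset.range 5,
        z (a + j) * r ^ (a + (j : ZMod n)).val = r ^ a.val * (z (a + j) * r ^ j) := by
      intro j _
      rw [pow_congr_mod hrn (val_add_natCast_modEq a j), pow_add]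
      ring
    rw [Finset.sum_congr rfl step2, ← Finset.mul_sum] at step1
    have : ∑ j ∈ Finset.range 5, z (a + j) * r ^ j = 0 :=
      (mul_eq_zero.mp step1).resolve_left (pow_ne_zero _ hr0)
    rw [hh, Polynomial.eval_finset_sum]
    simpa using this
  have hzero : h = 0 := by
    apply Polynomial.eq_zero_of_natDegree_lt_card_of_eval_eq_zero h
      (f := fun t : Fin 5 => δ ^ el t)
    · intro s t hst
      exact helinj (delta_pow_inj hδ0 hδ (helval s) (helval t) hst)
    · exact heval
    · rw [Fintype.card_fin]
      exact lt_of_le_of_lt (sumC_natDegree_le _ (by norm_num)) (by norm_num)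
  funext i
  by_contra hc
  obtain ⟨j, hj, hij⟩ := Finset.mem_image.mp (hsupp i (by simpa using hc))
  have : h.coeff j = z (a + j) := sumC_coeff _ j (Finset.mem_range.mp hj)
  rw [hzero] at this
  have hz0 : z (a + j) = 0 := by simpa using this.symm
  have : c (a + (j : ZMod n)) = 0 := by
    apply (algebraMap F E).injective
    rw [map_zero]
    exact hz0
  rw [hij] at this
  exact hc (by simpa using this)

lemma exists_boundary {n : ℕ} [NeZero n] {F : Type*} [Zero F] (c : ZMod n → F)
    {s t : ZMod n} (hs : c s ≠ 0) (ht : c t = 0) :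
    ∃ i, c i = 0 ∧ c (i + 1) ≠ 0 := by
  by_contra hB
  push_neg at hB
  have key : ∀ k : ℕ, c (t + (k : ZMod n)) = 0 := by
    intro k
    induction k with
    | zero => simpa using ht
    | succ k ih =>
      have hcast : ((k + 1 : ℕ) : ZMod n) = (k : ZMod n) + 1 := by push_cast; ring
      rw [hcast, ← add_assoc]
      exact hB _ ih
  apply hs
  have hkey := key (s - t).val
  have h2 : t + (s - t) = s := by ring
  rwa [ZMod.natCast_val, ZMod.cast_id, h2] at hkey

lemma arc_of_single_boundary {n : ℕ} [NeZero n] {F : Type*} [Zero F] [DecidableEq F]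
    (c : ZMod n → F) {b : ZMod n}
    (huniq : ∀ i, c i = 0 → c (i + 1) ≠ 0 → i = b)
    (hb : c (b + 1) ≠ 0) :
    Finset.univ.filter (fun i : ZMod n => c i ≠ 0) =
      (Finset.range ((Finset.univ.filter fun i : ZMod n => c i ≠ 0).card)).image
        (fun j : ℕ => (b + 1) + (j : ZMod n)) := by
  classical
  set a := b + 1 with ha
  set S := Finset.univ.filter (fun i : ZMod n => c i ≠ 0) with hS
  have haS : a ∈ S := by simp [hS, hb]
  have hstep : ∀ i, c i ≠ 0 → i ≠ a → c (i - 1) ≠ 0 := by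
    intro i hi hia hzero
    have h1 : c ((i - 1) + 1) ≠ 0 := by rwa [sub_add_cancel]
    have h2 := huniq (i - 1) hzero h1
    apply hia
    rw [ha, ← h2]
    ring
  set K := (Finset.range n).filter (fun k : ℕ => c (a + (k : ZMod n)) ≠ 0) with hK
  have hK0 : 0 ∈ K := by
    simp only [hK, Finset.mem_filter, Finset.mem_range]
    refine ⟨Nat.pos_of_ne_zero (NeZero.ne n), ?_⟩
    simpa using hb
  have hKdc : ∀ k, k + 1 ∈ K → k ∈ K := by
    intro k hk1
    simp only [hK, Finset.mem_filter, Finset.mem_range] at hk1 ⊢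
    obtain ⟨hlt, hcz⟩ := hk1
    refine ⟨by omega, ?_⟩
    have hia : a + ((k + 1 : ℕ) : ZMod n) ≠ a := by
      intro hcontra
      have h3 : ((k + 1 : ℕ) : ZMod n) = 0 := by
        have h4 : a + ((k + 1 : ℕ) : ZMod n) = a + 0 := by rw [hcontra, add_zero]
        exact add_left_cancel h4
      rw [ZMod.natCast_eq_zero_iff] at h3
      have := Nat.le_of_dvd (by omega) h3
      omega
    have h2 := hstep _ hcz hia
    have h3 : a + ((k + 1 : ℕ) : ZMod n) - 1 = a + (k : ZMod n) := by push_cast; ring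
    rwa [h3] at h2
  have hdown : ∀ t k : ℕ, k + t ∈ K → k ∈ K := by
    intro t
    induction t with
    | zero => intro k hk; simpa using hk
    | succ t ih =>
      intro k hk
      apply hKdc
      apply ih
      have : k + 1 + t = k + (t + 1) := by omega
      rwa [this]
  have hKne : K.Nonempty := ⟨0, hK0⟩
  set M := K.max' hKne with hM
  have hKsub : K ⊆ Finset.range (M + 1) := by
    intro k hk
    exact Finset.mem_range.mpr (by have := K.le_max' k hk; omega)
  have hsub2 : Finset.range (M + 1) ⊆ K := by
    intro j hj
    rw [Finset.mem_range] at hj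
    apply hdown (M - j) j
    have h5 : j + (M - j) = M := by omega
    rw [h5]
    exact K.max'_mem hKne
  have hKeq : K = Finset.range (M + 1) := Finset.Subset.antisymm hKsub hsub2
  have hinj : Set.InjOn (fun k : ℕ => a + (k : ZMod n)) K := by
    intro j1 hj1 j2 hj2 he
    have hj1' : j1 < n := Finset.mem_range.mp (Finset.mem_filter.mp hj1).1
    have hj2' : j2 < n := Finset.mem_range.mp (Finset.mem_filter.mp hj2).1
    have h6 : (j1 : ZMod n) = (j2 : ZMod n) := add_left_cancel he
    have h7 := congrArg ZMod.val h6
    rw [ZMod.val_natCast, ZMod.val_natCast, Nat.mod_eq_of_lt hj1', Nat.mod_eq_of_lt hj2'] at h7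
    exact h7
  have hSK : S = K.image (fun k : ℕ => a + (k : ZMod n)) := by
    ext i
    simp only [hS, hK, Finset.mem_filter, Finset.mem_univ, true_and, Finset.mem_image,
      Finset.mem_range]
    constructor
    · intro hi
      refine ⟨(i - a).val, ⟨ZMod.val_lt _, ?_⟩, ?_⟩
      · rw [ZMod.natCast_val, ZMod.cast_id]
        have h8 : a + (i - a) = i := by ring
        rwa [h8]
      · rw [ZMod.natCast_val, ZMod.cast_id]
        ring
    · rintro ⟨k, ⟨-, hk⟩, rfl⟩
      exact hk
  have hcard : S.card = M + 1 := by
    rw [hSK, Finset.card_image_of_injOn hinj, hKeq, Finset.card_range]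
  rw [hcard, hSK, hKeq]

lemma code_card {q n : ℕ} [NeZero n] {F E : Type*} [Field F] [Fintype F] [DecidableEq F]
    [Field E] [Fintype E] [Algebra F E]
    (hq : Fintype.card F = q) (hdvd : n ∣ q ^ 2 - 1) (hn : q + 1 < n)
    {δ : E} (hδ0 : δ ≠ 0) (hδ : orderOf δ = n)
    (Code : Set (ZMod n → F))
    (hCode : Code = {c : ZMod n → F |
      ((X - C (δ⁻¹ ^ q)) * (X - C δ⁻¹) * (X - 1) * (X - C δ) * (X - C (δ ^ q))) ∣
        (polyOf c).map (algebraMap F E)}) :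
    Nat.card Code = q ^ (n - 5) := by
  classical
  have hq2 : 2 ≤ q := hq ▸ Fintype.one_lt_card
  obtain ⟨hn8, -⟩ := numeric_facts hq2 hdvd hn
  -- characteristic and Frobenius
  obtain ⟨p, hp⟩ := CharP.exists F
  haveI := hp
  obtain ⟨m, hpprime, hqm⟩ := FiniteField.card F p
  haveI : CharP E p := charP_of_injective_algebraMap (algebraMap F E).injective p
  haveI := Fact.mk hpprime
  set φ : E →+* E := iterateFrobenius E p m with hφdef
  have hφ : ∀ x : E, φ x = x ^ q := fun x => by
    rw [hφdef, iterateFrobenius_def, ← hqm, hq]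
  -- fixed field
  have hfix : ∀ a : E, a ^ q = a → a ∈ Set.range (algebraMap F E) := by
    intro a ha
    set T : Finset E := Finset.univ.image (algebraMap F E) with hT
    set S' : Finset E := Finset.univ.filter (fun x : E => x ^ q = x) with hS'
    have hTS : T ⊆ S' := by
      intro x hx
      obtain ⟨y, -, rfl⟩ := Finset.mem_image.mp hx
      simp only [hS', Finset.mem_filter, Finset.mem_univ, true_and]
      rw [← map_pow, ← hq, FiniteField.pow_card]
    have hpoly : (X ^ q - X : Polynomial E) ≠ 0 := by
      have h1 : (X ^ q - X : Polynomial E).coeff q = 1 := by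
        rw [Polynomial.coeff_sub, Polynomial.coeff_X_pow, if_pos rfl, Polynomial.coeff_X,
          if_neg (by omega)]
        norm_num
      intro h
      rw [h] at h1
      simp at h1
    have hcard : S'.card ≤ q := by
      have hsub : S' ⊆ (X ^ q - X : Polynomial E).roots.toFinset := by
        intro x hx
        simp only [hS', Finset.mem_filter, Finset.mem_univ, true_and] at hx
        rw [Multiset.mem_toFinset, Polynomial.mem_roots hpoly]
        simp [Polynomial.IsRoot, hx]
      calc S'.card ≤ _ := Finset.card_le_card hsub
        _ ≤ Multiset.card (X ^ q - X : Polynomial E).roots := Multiset.toFinset_card_le _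
        _ ≤ (X ^ q - X : Polynomial E).natDegree := Polynomial.card_roots' _
        _ ≤ q := by
            refine le_trans (Polynomial.natDegree_sub_le _ _) ?_
            rw [Polynomial.natDegree_X_pow, Polynomial.natDegree_X]
            omega
    have hTcard : T.card = q := by
      rw [hT, Finset.card_image_of_injective _ (algebraMap F E).injective,
        Finset.card_univ, hq]
    have hTeq : T = S' := Finset.eq_of_subset_of_card_le hTS (by omega)
    have haS : a ∈ S' := by simp [hS', ha]
    rw [← hTeq] at haS
    obtain ⟨y, -, hy⟩ := Finset.mem_image.mp haS
    exact ⟨y, hy⟩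
  -- the generator polynomial over E
  set g : Polynomial E :=
    (X - C (δ⁻¹ ^ q)) * (X - C δ⁻¹) * (X - 1) * (X - C δ) * (X - C (δ ^ q)) with hg
  have hδn : δ ^ n = 1 := by rw [← hδ]; exact pow_orderOf_eq_one δ
  have hq21 : δ ^ (q ^ 2 - 1) = 1 := orderOf_dvd_iff_pow_eq_one.mp (hδ ▸ hdvd)
  have hδq2 : (δ ^ q) ^ q = δ := by
    have h2 : q ^ 2 = (q ^ 2 - 1) + 1 := by
      have : 1 ≤ q ^ 2 := Nat.one_le_pow _ _ (by omega)
      omega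
    rw [← pow_mul, ← pow_two, h2, pow_add, hq21, one_mul, pow_one]
  have hδiq2 : (δ⁻¹ ^ q) ^ q = δ⁻¹ := by
    rw [inv_pow, inv_pow, hδq2]
  have hmapg : g.map φ = g := by
    simp only [hg, Polynomial.map_mul, Polynomial.map_sub, Polynomial.map_X,
      Polynomial.map_C, Polynomial.map_one, hφ]
    rw [hδq2, hδiq2]
    ring
  have hlift : g ∈ Polynomial.lifts (algebraMap F E) := by
    rw [Polynomial.lifts_iff_coeff_lifts]
    intro k
    apply hfix
    have h2 := congrArg (fun P : Polynomial E => P.coeff k) hmapg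
    simpa [Polynomial.coeff_map, hφ] using h2
  have hXone : (X - 1 : Polynomial E) = X - C 1 := by rw [map_one]
  have m1 := monic_X_sub_C (δ⁻¹ ^ q)
  have m2 := monic_X_sub_C (δ⁻¹)
  have m3 := monic_X_sub_C (1 : E)
  have m4 := monic_X_sub_C δ
  have m5 := monic_X_sub_C (δ ^ q)
  have hgmonic : g.Monic := by
    rw [hg, hXone]
    exact ((((m1.mul m2).mul m3).mul m4).mul m5)
  have hgdeg : g.natDegree = 5 := by
    rw [hg, hXone,
      (((m1.mul m2).mul m3).mul m4).natDegree_mul m5,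
      ((m1.mul m2).mul m3).natDegree_mul m4,
      (m1.mul m2).natDegree_mul m3,
      m1.natDegree_mul m2,
      natDegree_X_sub_C, natDegree_X_sub_C, natDegree_X_sub_C, natDegree_X_sub_C,
      natDegree_X_sub_C]
  obtain ⟨w, hwmap, hwdeg, hwmonic⟩ := Polynomial.lifts_and_degree_eq_and_monic hlift hgmonic
  have hwnd : w.natDegree = 5 := by
    rw [Polynomial.natDegree_eq_of_degree_eq hwdeg, hgdeg]
  have hw0 : w ≠ 0 := hwmonic.ne_zero
  have hmem : ∀ c : ZMod n → F, c ∈ Code ↔ w ∣ polyOf c := by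
    intro c
    rw [hCode, Set.mem_setOf_eq, ← hwmap, Polynomial.map_dvd_map' (algebraMap F E)]
  -- the bijection
  set Nk := n - 5 with hNk
  have hNk3 : 3 ≤ Nk := by omega
  set Ph : (Fin Nk → F) → Polynomial F := fun h =>
    ∑ j ∈ Finset.range Nk, C (if hj : j < Nk then h ⟨j, hj⟩ else 0) * X ^ j with hPh
  have hPhdeg : ∀ h, (Ph h).natDegree ≤ Nk - 1 := fun h => sumC_natDegree_le _ (by omega)
  have hmuldeg : ∀ h, (w * Ph h).natDegree < n := by
    intro h
    refine lt_of_le_of_lt (Polynomial.natDegree_mul_le) ?_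
    have := hPhdeg h
    omega
  set A : (Fin Nk → F) → (ZMod n → F) := fun h i => (w * Ph h).coeff i.val with hA
  have hArec : ∀ h, polyOf (A h) = w * Ph h := fun h => polyOf_recover _ (hmuldeg h)
  set f : (Fin Nk → F) → Code := fun h => ⟨A h, (hmem _).mpr ⟨Ph h, hArec h⟩⟩ with hf
  have hfinj : Function.Injective f := by
    intro h h' he
    have h1 : A h = A h' := congrArg Subtype.val he
    have h2 : w * Ph h = w * Ph h' := by rw [← hArec h, ← hArec h', h1]
    have h3 : Ph h = Ph h' := mul_left_cancel₀ hw0 h2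
    funext j
    have h4 := congrArg (fun P : Polynomial F => P.coeff (j : ℕ)) h3
    simp only [hPh] at h4
    rw [sumC_coeff _ _ j.isLt, sumC_coeff _ _ j.isLt] at h4
    simpa [dif_pos j.isLt] using h4
  have hfsurj : Function.Surjective f := by
    rintro ⟨c, hc⟩
    obtain ⟨u, hu⟩ := (hmem c).mp hc
    have hund : u.natDegree ≤ Nk - 1 := by
      by_cases hu0 : u = 0
      · simp [hu0]
      · have h1 : (w * u).natDegree = 5 + u.natDegree := by
          rw [Polynomial.natDegree_mul hw0 hu0, hwnd]
        have h2 : (w * u).natDegree < n := hu ▸ polyOf_natDegree_lt c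
        omega
    set hfun : Fin Nk → F := fun j => u.coeff (j : ℕ) with hhfun
    have hPhu : Ph hfun = u := by
      ext k
      by_cases hk : k < Nk
      · rw [hPh]
        rw [sumC_coeff _ _ hk]
        simp [hhfun, dif_pos hk]
      · have hk' : Nk - 1 < k := by omega
        rw [Polynomial.coeff_eq_zero_of_natDegree_lt (lt_of_le_of_lt (hPhdeg hfun) hk'),
          Polynomial.coeff_eq_zero_of_natDegree_lt (lt_of_le_of_lt hund hk')]
    refine ⟨hfun, ?_⟩
    apply Subtype.ext
    show A hfun = c
    funext i
    show (w * Ph hfun).coeff i.val = c i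
    rw [hPhu, ← hu, polyOf_coeff]
  have hbij : Function.Bijective f := ⟨hfinj, hfsurj⟩
  rw [← Nat.card_eq_of_bijective f hbij, Nat.card_eq_fintype_card]
  rw [Fintype.card_fun]
  simp [hq]

end Aux

/-- for a prime power `q`, `n | q²−1` with `n > q+1`, and
`δ ∈ F_{q²}* \ F_q` of order `n`, the cyclic code with generator polynomial
`g(x) = (x−δ^{−q})(x−δ^{−1})(x−1)(x−δ)(x−δ^q)` is an `[n, n−5, d]_q` code with
`4 ≤ d ≤ 6`, and if `5 ≤ d ≤ 6` then it is an `(n,7)_q` MDS symbol-pair code. -/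
theorem stmt12 {q n d : ℕ} [NeZero n] {F E : Type*} [Field F] [Fintype F] [DecidableEq F]
    [Field E] [Fintype E] [Algebra F E]
    (hq : Fintype.card F = q) (hE : Fintype.card E = q ^ 2)
    (hdvd : n ∣ q ^ 2 - 1) (hn : q + 1 < n)
    {δ : E} (hδ0 : δ ≠ 0) (hδF : δ ∉ Set.range (algebraMap F E)) (hδ : orderOf δ = n)
    (Code : Set (ZMod n → F))
    (hCode : Code = {c : ZMod n → F |
      ((X - C (δ⁻¹ ^ q)) * (X - C δ⁻¹) * (X - 1) * (X - C δ) * (X - C (δ ^ q))) ∣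
        (polyOf c).map (algebraMap F E)})
    (hd : (∀ c ∈ Code, c ≠ 0 → d ≤ hammingNorm c) ∧ ∃ c ∈ Code, c ≠ 0 ∧ hammingNorm c = d) :
    Nat.card Code = q ^ (n - 5) ∧ 4 ≤ d ∧ d ≤ 6 ∧
      (5 ≤ d → IsMinPairDist Code 7 ∧ Nat.card Code = q ^ (n - 7 + 2)) := by
  classical
  have hq2 : 2 ≤ q := hq ▸ Fintype.one_lt_card
  obtain ⟨hn8, hn2q⟩ := numeric_facts hq2 hdvd hn
  have hcard : Nat.card Code = q ^ (n - 5) := code_card hq hdvd hn hδ0 hδ Code hCode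
  set g : Polynomial E :=
    (X - C (δ⁻¹ ^ q)) * (X - C δ⁻¹) * (X - 1) * (X - C δ) * (X - C (δ ^ q)) with hg
  -- power facts
  have hδn : δ ^ n = 1 := by rw [← hδ]; exact pow_orderOf_eq_one δ
  have hinv : δ⁻¹ = δ ^ (n - 1) := by
    apply inv_eq_of_mul_eq_one_left
    rw [← pow_succ]
    have h1 : n - 1 + 1 = n := by omega
    rw [h1, hδn]
  have hinvq : δ⁻¹ ^ q = δ ^ (n - q) := by
    rw [hinv, ← pow_mul]
    apply pow_congr_mod hδn
    show ((n - 1) * q) % n = (n - q) % n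
    have key : (n - 1) * q = (n - q) + (q - 1) * n := by
      have h1 : 1 ≤ q := by omega
      have h2 : q ≤ n := by omega
      have h3 : 1 ≤ n := by omega
      zify [h1, h2, h3]
      ring
    rw [key, Nat.add_mul_mod_self_right]
  -- vanishing at roots of g
  have hvanish : ∀ c ∈ Code, ∀ r : E, (X - C r) ∣ g →
      ∑ i : ZMod n, algebraMap F E (c i) * r ^ i.val = 0 := by
    intro c hc r hr
    rw [hCode, Set.mem_setOf_eq] at hc
    obtain ⟨P, hP⟩ := dvd_trans hr hc
    have h1 : ((polyOf c).map (algebraMap F E)).eval r = 0 := by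
      rw [hP, Polynomial.eval_mul, Polynomial.eval_sub, Polynomial.eval_X, Polynomial.eval_C,
        sub_self, zero_mul]
    rwa [eval_map_polyOf] at h1
  have hd1 : (X - C (δ⁻¹ ^ q)) ∣ g :=
    ⟨(X - C δ⁻¹) * (X - 1) * (X - C δ) * (X - C (δ ^ q)), by rw [hg]; ring⟩
  have hd2 : (X - C δ⁻¹) ∣ g :=
    ⟨(X - C (δ⁻¹ ^ q)) * (X - 1) * (X - C δ) * (X - C (δ ^ q)), by rw [hg]; ring⟩
  have hd3 : (X - C (1 : E)) ∣ g :=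
    ⟨(X - C (δ⁻¹ ^ q)) * (X - C δ⁻¹) * (X - C δ) * (X - C (δ ^ q)), by rw [hg, map_one]; ring⟩
  have hd4 : (X - C δ) ∣ g :=
    ⟨(X - C (δ⁻¹ ^ q)) * (X - C δ⁻¹) * (X - 1) * (X - C (δ ^ q)), by rw [hg]; ring⟩
  have hd5 : (X - C (δ ^ q)) ∣ g :=
    ⟨(X - C (δ⁻¹ ^ q)) * (X - C δ⁻¹) * (X - 1) * (X - C δ), by rw [hg]; ring⟩
  -- power-form vanishing for arc5
  have hv5 : ∀ c ∈ Code, ∀ t : Fin 5, ∑ i : ZMod n, algebraMap F E (c i) *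
      (δ ^ (![n - q, n - 1, 0, 1, q] t : ℕ)) ^ i.val = 0 := by
    intro c hc t
    fin_cases t
    · have h := hvanish c hc _ hd1
      rw [hinvq] at h
      simpa using h
    · have h := hvanish c hc _ hd2
      rw [hinv] at h
      simpa using h
    · have h := hvanish c hc _ hd3
      simpa using h
    · have h := hvanish c hc _ hd4
      simpa using h
    · have h := hvanish c hc _ hd5
      simpa using h
  -- linearity
  have hlin : ∀ u v : ZMod n → F, u ∈ Code → v ∈ Code → u - v ∈ Code := by
    intro u v hu hv
    rw [hCode, Set.mem_setOf_eq] at hu hv ⊢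
    rw [polyOf_sub, Polynomial.map_sub]
    exact dvd_sub hu hv
  have hnormeq : ∀ c : ZMod n → F,
      hammingNorm c = (Finset.univ.filter fun i : ZMod n => c i ≠ 0).card := fun _ => rfl
  -- BCH bound
  have hbch : ∀ c ∈ Code, c ≠ 0 → 4 ≤ hammingNorm c := by
    intro c hc hc0
    by_contra hlt
    push_neg at hlt
    apply hc0
    apply bch_weight hδ0 hδ c (hvanish c hc _ hd2) ?_ (hvanish c hc _ hd4)
    · rw [hnormeq] at hlt; omega
    · have := hvanish c hc _ hd3
      simpa using this
  -- pigeonhole pair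
  set T : Finset (ZMod n) := (Finset.range 6).image (fun j : ℕ => (j : ZMod n)) with hT
  have hTcard : T.card = 6 := by
    rw [hT, Finset.card_image_of_injOn, Finset.card_range]
    intro j1 hj1 j2 hj2 he
    simp only [Finset.coe_range, Set.mem_Iio] at hj1 hj2
    have h7 := congrArg ZMod.val he
    rwa [ZMod.val_natCast, ZMod.val_natCast, Nat.mod_eq_of_lt (by omega),
      Nat.mod_eq_of_lt (by omega)] at h7
  haveI : Fintype Code := Fintype.ofFinite Code
  have hcards : Fintype.card ({i : ZMod n // i ∉ T} → F) < Fintype.card Code := by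
    have h1 : Fintype.card {i : ZMod n // i ∉ T} = n - 6 := by
      rw [Fintype.card_subtype]
      have h2 : Finset.univ.filter (fun i : ZMod n => i ∉ T) = Finset.univ \ T := by
        ext i; simp
      rw [h2, Finset.card_sdiff_of_subset (Finset.subset_univ T), Finset.card_univ, ZMod.card, hTcard]
    have h3 : Fintype.card Code = q ^ (n - 5) := by rw [← Nat.card_eq_fintype_card, hcard]
    rw [Fintype.card_fun, h1, h3, hq]
    exact Nat.pow_lt_pow_right (by omega) (by omega)
  obtain ⟨u0, v0, huv0, he0⟩ := Fintype.exists_ne_map_eq_of_card_lt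
    (fun (c : Code) (j : {i : ZMod n // i ∉ T}) => c.1 j.1) hcards
  have hagree : ∀ i : ZMod n, i ∉ T → u0.1 i = v0.1 i := fun i hi => congrFun he0 ⟨i, hi⟩
  have hcdmem : u0.1 - v0.1 ∈ Code := hlin _ _ u0.2 v0.2
  have hcd0 : u0.1 - v0.1 ≠ 0 := sub_ne_zero.mpr (fun h => huv0 (Subtype.ext h))
  have hsuppT : ∀ i, (u0.1 - v0.1) i ≠ 0 → i ∈ T := by
    intro i hi
    by_contra hiT
    apply hi
    show u0.1 i - v0.1 i = 0
    rw [hagree i hiT, sub_self]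
  have hwle : hammingNorm (u0.1 - v0.1) ≤ 6 := by
    rw [hnormeq]
    calc (Finset.univ.filter fun i : ZMod n => (u0.1 - v0.1) i ≠ 0).card
        ≤ T.card := Finset.card_le_card (fun i hi => hsuppT i (Finset.mem_filter.mp hi).2)
      _ = 6 := hTcard
  -- conclusions about d
  obtain ⟨c0, hc0mem, hc0ne, hc0norm⟩ := hd.2
  have hd4' : 4 ≤ d := hc0norm ▸ hbch c0 hc0mem hc0ne
  have hd6 : d ≤ 6 := le_trans (hd.1 _ hcdmem hcd0) hwle
  refine ⟨hcard, hd4', hd6, ?_⟩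
  intro hd5'
  -- lower bound on pair distance
  have hlower : ∀ u ∈ Code, ∀ v ∈ Code, u ≠ v → 7 ≤ pairDist u v := by
    intro u hu v hv huvne
    set c : ZMod n → F := u - v with hc
    have hcmem : c ∈ Code := hlin _ _ hu hv
    have hcne : c ≠ 0 := sub_ne_zero.mpr huvne
    set S := Finset.univ.filter (fun i : ZMod n => c i ≠ 0) with hS
    set B := Finset.univ.filter (fun i : ZMod n => c i = 0 ∧ c (i + 1) ≠ 0) with hB
    have hpd : pairDist u v =
        (Finset.univ.filter fun i : ZMod n => c i ≠ 0 ∨ c (i + 1) ≠ 0).card := by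
      rw [pairDist]
      congr 1
      apply Finset.filter_congr
      intro i _
      simp only [Ne, Prod.mk.injEq, not_and_or, hc, Pi.sub_apply, sub_eq_zero]
    have hSsub : S ⊆ Finset.univ.filter fun i : ZMod n => c i ≠ 0 ∨ c (i + 1) ≠ 0 := by
      intro i hi
      rw [Finset.mem_filter] at hi ⊢
      exact ⟨hi.1, Or.inl hi.2⟩
    have hBsub : B ⊆ Finset.univ.filter fun i : ZMod n => c i ≠ 0 ∨ c (i + 1) ≠ 0 := by
      intro i hi
      rw [Finset.mem_filter] at hi ⊢
      exact ⟨hi.1, Or.inr hi.2.2⟩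
    have hdis : Disjoint S B := by
      rw [Finset.disjoint_left]
      intro i hi hi'
      rw [Finset.mem_filter] at hi hi'
      exact hi.2 hi'.2.1
    have hunion : S.card + B.card ≤
        (Finset.univ.filter fun i : ZMod n => c i ≠ 0 ∨ c (i + 1) ≠ 0).card := by
      rw [← Finset.card_union_of_disjoint hdis]
      exact Finset.card_le_card (Finset.union_subset hSsub hBsub)
    have hw5 : 5 ≤ S.card := by
      rw [← hnormeq]
      exact le_trans hd5' (hd.1 c hcmem hcne)
    rw [hpd]
    by_cases h7 : 7 ≤ S.card
    · exact le_trans h7 (le_trans (Nat.le_add_right _ _) hunion)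
    push_neg at h7
    -- B is nonempty
    have hsx : ∃ s, c s ≠ 0 := by
      by_contra hall
      push_neg at hall
      exact hcne (funext fun i => hall i)
    have htx : ∃ t, c t = 0 := by
      by_contra hall
      push_neg at hall
      have : S = Finset.univ := by
        ext i; simp [hS, hall i]
      have h8 : S.card = n := by rw [this, Finset.card_univ, ZMod.card]
      omega
    obtain ⟨s, hs⟩ := hsx
    obtain ⟨t, ht⟩ := htx
    obtain ⟨i0, hi0z, hi0s⟩ := exists_boundary c hs ht
    have hBne : B.Nonempty := ⟨i0, by simp [hB, hi0z, hi0s]⟩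
    by_cases h6 : 6 ≤ S.card
    · have hB1 : 1 ≤ B.card := Finset.card_pos.mpr hBne
      omega
    push_neg at h6
    have hS5 : S.card = 5 := by omega
    -- show B.card ≥ 2
    by_cases hB2 : 2 ≤ B.card
    · omega
    push_neg at hB2
    exfalso
    have hB1 : B.card = 1 := by
      have := Finset.card_pos.mpr hBne
      omega
    obtain ⟨b, hb⟩ := Finset.card_eq_one.mp hB1
    have huniq : ∀ i, c i = 0 → c (i + 1) ≠ 0 → i = b := by
      intro i h1 h2
      have : i ∈ B := by simp [hB, h1, h2]
      rw [hb, Finset.mem_singleton] at this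
      exact this
    have hbB : b ∈ B := by rw [hb]; exact Finset.mem_singleton_self b
    have hbprop : c b = 0 ∧ c (b + 1) ≠ 0 := (Finset.mem_filter.mp hbB).2
    have harc := arc_of_single_boundary c huniq hbprop.2
    rw [← hS, hS5] at harc
    have hczero : c = 0 := by
      apply arc5 hq2 hn8 hn2q hn hδ0 hδ c (b + 1) (hv5 c hcmem)
      intro i hi
      have : i ∈ S := by simp [hS, hi]
      rwa [harc] at this
    exact hcne hczero
  constructor
  · constructor
    · exact hlower
    · refine ⟨u0.1, u0.2, v0.1, v0.2, fun h => huv0 (Subtype.ext h), ?_⟩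
      have hle7 : pairDist u0.1 v0.1 ≤ 7 := by
        rw [pairDist]
        calc (Finset.univ.filter fun i : ZMod n =>
              (u0.1 i, u0.1 (i + 1)) ≠ (v0.1 i, v0.1 (i + 1))).card
            ≤ ((Finset.range 7).image (fun j : ℕ => (j : ZMod n) - 1)).card := by
              apply Finset.card_le_card
              intro i hi
              rw [Finset.mem_filter] at hi
              have hior : (u0.1 - v0.1) i ≠ 0 ∨ (u0.1 - v0.1) (i + 1) ≠ 0 := by
                by_contra hcon
                push_neg at hcon
                apply hi.2
                have e1 : u0.1 i = v0.1 i := by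
                  have := hcon.1
                  rwa [Pi.sub_apply, sub_eq_zero] at this
                have e2 : u0.1 (i + 1) = v0.1 (i + 1) := by
                  have := hcon.2
                  rwa [Pi.sub_apply, sub_eq_zero] at this
                rw [e1, e2]
              rcases hior with h | h
              · obtain ⟨j, hj, hji⟩ := Finset.mem_image.mp (hT ▸ hsuppT i h)
                rw [Finset.mem_range] at hj
                apply Finset.mem_image.mpr
                refine ⟨j + 1, Finset.mem_range.mpr (by omega), ?_⟩
                show ((j + 1 : ℕ) : ZMod n) - 1 = i
                rw [← hji]
                push_cast
                ring
              · obtain ⟨j, hj, hji⟩ := Finset.mem_image.mp (hT ▸ hsuppT (i + 1) h)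
                rw [Finset.mem_range] at hj
                apply Finset.mem_image.mpr
                refine ⟨j, Finset.mem_range.mpr (by omega), ?_⟩
                show ((j : ℕ) : ZMod n) - 1 = i
                rw [hji]
                ring
          _ ≤ 7 := le_trans (Finset.card_image_le) (by rw [Finset.card_range])
      have hge7 : 7 ≤ pairDist u0.1 v0.1 :=
        hlower u0.1 u0.2 v0.1 v0.2 (fun h => huv0 (Subtype.ext h))
      omega
  · rw [show n - 7 + 2 = n - 5 by omega]
    exact hcard
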